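/- For positive integers n, m, r, k with k < n, the number of permutations σ of [n] with exactly m r-excedances, σ(n) = k, and σ⁻¹(n) = i (for any fixed i with n − r < i < n) equals the number of permutations of [n−1] with exactly m r-excedances ending in k. -/

import Mathlib

/-- Number of `r`-descents of a permutation `σ` of `[n]` (positions `i < n` with
`σ(i) ≥ σ(i+1) + r`), encoded on `Fin n`. -/
def rDesc (n r : ℕ) (σ : Equiv.Perm (Fin n)) : ℕ :=
  (Finset.univ.filter fun i : Fin n =>
    (if h : (i : ℕ) + 1 < n then ((σ ⟨(i : ℕ) + 1, h⟩ : Fin n) : ℕ) else n) + r ≤ (σ i : ℕ)).card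

/-- Number of `r`-excedances of a permutation `σ` of `[n]` (positions `i ≤ n` with
`σ(i) ≥ i + r`), encoded on `Fin n`. -/
def rExc (n r : ℕ) (σ : Equiv.Perm (Fin n)) : ℕ :=
  (Finset.univ.filter fun i : Fin n => (i : ℕ) + r ≤ (σ i : ℕ)).card

/-- The last value `σ(n)` of a permutation of `[n]` (as an element of `{1,…,n}`). -/
def lastVal (n : ℕ) (σ : Equiv.Perm (Fin n)) : ℕ :=
  if h : 0 < n then ((σ ⟨n - 1, Nat.sub_lt h Nat.one_pos⟩ : Fin n) : ℕ) + 1 else 0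

/-- `Ar r n m k` = number of permutations of `[n]` with exactly `m` `r`-descents
whose last value is `k`. -/
def Ar (r n m k : ℕ) : ℕ :=
  (Finset.univ.filter fun σ : Equiv.Perm (Fin n) => rDesc n r σ = m ∧ lastVal n σ = k).card

/-- The position (in `{1,…,n}`) of the value `n` in `σ`. -/
def posTop (n : ℕ) (σ : Equiv.Perm (Fin n)) : ℕ :=
  if h : 0 < n then ((σ⁻¹ ⟨n - 1, Nat.sub_lt h Nat.one_pos⟩ : Fin n) : ℕ) + 1 else 0

/-- For `n - r < i < n` and `k < n`: the permutations of `[n]` with `m` `r`-excedances,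
last value `k`, and `σ⁻¹(n) = i` are equinumerous with the permutations of `[n-1]` with
`m` `r`-excedances ending in `k`. -/
theorem stmt6 (n m r k i : ℕ) (hn : 1 ≤ n) (hm : 1 ≤ m) (hr : 1 ≤ r) (hk : 1 ≤ k)
    (hkn : k < n) (hi₁ : n - r < i) (hi₂ : i < n) :
    (Finset.univ.filter fun σ : Equiv.Perm (Fin n) =>
        rExc n r σ = m ∧ lastVal n σ = k ∧ posTop n σ = i).card =
    (Finset.univ.filter fun σ : Equiv.Perm (Fin (n - 1)) =>
        rExc (n - 1) r σ = m ∧ lastVal (n - 1) σ = k).card := by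
  obtain ⟨N, rfl⟩ : ∃ N, n = N + 1 := ⟨n - 1, by omega⟩
  show _ = (Finset.univ.filter fun σ : Equiv.Perm (Fin N) =>
      rExc N r σ = m ∧ lastVal N σ = k).card
  have hN1 : 1 ≤ N := by omega
  have hir : N + 2 ≤ i + r := by omega
  have hi0 : 1 ≤ i := by omega
  set a₀ : Fin (N + 1) := ⟨i - 1, by omega⟩ with ha₀
  have ha₀c : (a₀ : ℕ) = i - 1 := rfl
  have hsA : ∀ j : Fin N, ((a₀.succAbove j : Fin (N + 1)) : ℕ)
      = if (j : ℕ) < i - 1 then (j : ℕ) else (j : ℕ) + 1 := by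
    intro j
    rw [Fin.succAbove]
    by_cases h : (j : ℕ) < i - 1
    · rw [if_pos (by simpa [Fin.lt_def] using h), if_pos h]; rfl
    · rw [if_neg (by rw [Fin.lt_def, Fin.coe_castSucc, ha₀c]; exact h), if_neg h]; rfl
  set g : Equiv.Perm (Fin N) → Equiv.Perm (Fin (N + 1)) :=
    fun π => (finSuccEquiv' a₀).trans ((π.optionCongr).trans (finSuccEquiv' (Fin.last N)).symm)
    with hg
  have hga : ∀ π, g π a₀ = Fin.last N := by
    intro π
    simp [hg, finSuccEquiv'_at, finSuccEquiv'_symm_none]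
  have hgs : ∀ π j, g π (a₀.succAbove j) = Fin.castSucc (π j) := by
    intro π j
    simp [hg, finSuccEquiv'_succAbove, finSuccEquiv'_symm_some, Fin.succAbove_last]
  have hexc : ∀ π, rExc (N + 1) r (g π) = rExc N r π := by
    intro π
    unfold rExc
    refine Eq.symm (Finset.card_bij (fun j _ => a₀.succAbove j) ?_ ?_ ?_)
    · intro j hj
      simp only [Finset.mem_filter, Finset.mem_univ, true_and] at hj ⊢
      rw [hgs]
      have h1 : (π j : ℕ) < N := (π j).isLt
      have h2 : (j : ℕ) < i - 1 := by omega
      rw [Fin.coe_castSucc, hsA, if_pos h2]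
      exact hj
    · intro a _ b _ h
      exact Fin.succAbove_right_injective h
    · intro x hx
      simp only [Finset.mem_filter, Finset.mem_univ, true_and] at hx
      have hxa : x ≠ a₀ := by
        rintro rfl
        rw [hga] at hx
        simp only [Fin.val_last] at hx
        omega
      obtain ⟨j, hj⟩ := Fin.exists_succAbove_eq hxa
      refine ⟨j, ?_, hj⟩
      simp only [Finset.mem_filter, Finset.mem_univ, true_and]
      rw [← hj, hgs, Fin.coe_castSucc] at hx
      have h3 : (j : ℕ) ≤ ((a₀.succAbove j : Fin (N + 1)) : ℕ) := by
        rw [hsA]; split_ifs <;> omega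
      omega
  have hlast : ∀ σ : Equiv.Perm (Fin (N + 1)),
      lastVal (N + 1) σ = (σ (Fin.last N) : ℕ) + 1 := by
    intro σ; rw [lastVal, dif_pos (Nat.succ_pos N)]; rfl
  have hlastN : ∀ π : Equiv.Perm (Fin N),
      lastVal N π = (π ⟨N - 1, by omega⟩ : ℕ) + 1 := by
    intro π; rw [lastVal, dif_pos (show 0 < N by omega)]
  have hpos : ∀ σ : Equiv.Perm (Fin (N + 1)),
      posTop (N + 1) σ = (σ⁻¹ (Fin.last N) : ℕ) + 1 := by
    intro σ; rw [posTop, dif_pos (Nat.succ_pos N)]; rfl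
  have hlastidx : a₀.succAbove ⟨N - 1, by omega⟩ = Fin.last N := by
    apply Fin.ext
    rw [hsA]
    have h0 : ((⟨N - 1, by omega⟩ : Fin N) : ℕ) = N - 1 := rfl
    rw [h0, if_neg (by omega), Fin.val_last]
    omega
  refine Eq.symm (Finset.card_bij (fun π _ => g π) ?_ ?_ ?_)
  · intro π hπ
    simp only [Finset.mem_filter, Finset.mem_univ, true_and] at hπ ⊢
    obtain ⟨hπe, hπl⟩ := hπ
    refine ⟨by rw [hexc]; exact hπe, ?_, ?_⟩
    · rw [hlast, ← hlastidx, hgs, Fin.coe_castSucc]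
      rw [hlastN] at hπl
      exact hπl
    · rw [hpos, Equiv.Perm.inv_eq_iff_eq.mpr (hga π).symm]
      omega
  · intro π1 _ π2 _ h
    have h : g π1 = g π2 := h
    refine Equiv.ext fun j => ?_
    have hc : g π1 (a₀.succAbove j) = g π2 (a₀.succAbove j) := by rw [h]
    rw [hgs, hgs] at hc
    exact Fin.castSucc_injective _ hc
  · intro σ hσ
    simp only [Finset.mem_filter, Finset.mem_univ, true_and] at hσ
    obtain ⟨hσe, hσl, hσp⟩ := hσ
    rw [hpos] at hσp
    have hp : σ⁻¹ (Fin.last N) = a₀ := by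
      apply Fin.ext
      omega
    have hpa : σ a₀ = Fin.last N := by rw [← hp]; simp
    set π := Equiv.removeNone
        (((finSuccEquiv' a₀).symm.trans (σ : Fin (N+1) ≃ Fin (N+1))).trans
          (finSuccEquiv' (Fin.last N))) with hπdef
    have hgπ : g π = σ := by
      refine Equiv.ext fun x => ?_
      rcases eq_or_ne x a₀ with rfl | hx
      · rw [hga, hpa]
      · obtain ⟨j, rfl⟩ := Fin.exists_succAbove_eq hx
        rw [hgs]
        have hne : σ (a₀.succAbove j) ≠ Fin.last N := by
          rw [← hpa]
          exact fun hcon => (Fin.succAbove_ne a₀ j) (σ.injective hcon)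
        obtain ⟨y, hy⟩ := Fin.exists_succAbove_eq hne
        have he : ((((finSuccEquiv' a₀).symm.trans (σ : Fin (N+1) ≃ Fin (N+1))).trans
            (finSuccEquiv' (Fin.last N)))) (some j) = some y := by
          simp only [Equiv.trans_apply, finSuccEquiv'_symm_some, ← hy,
            finSuccEquiv'_succAbove]
        have h2 := Equiv.removeNone_some _ ⟨y, he⟩
        rw [he] at h2
        have hyy : π j = y := Option.some_injective _ h2
        rw [hyy, ← hy, Fin.succAbove_last_apply]
    refine ⟨π, ?_, hgπ⟩
    simp only [Finset.mem_filter, Finset.mem_univ, true_and]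
    constructor
    · rw [← hexc π, hgπ]; exact hσe
    · rw [hlastN]
      have h5 : σ (Fin.last N) = Fin.castSucc (π ⟨N - 1, by omega⟩) := by
        have h6 := hgs π ⟨N - 1, by omega⟩
        rw [hlastidx, hgπ] at h6
        exact h6
      rw [hlast, h5, Fin.coe_castSucc] at hσl
      exact hσl
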